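/- arXiv:1811.04308 — 2 statements merged into one kernel-verified Lean document; each statement's English description precedes it below -/
import Mathlib

section
/- Fix n ∈ ℕ and a compact set K ⊂ ℂ. The map Q_n from H² \ {0} to C(K) sending f to (the restriction to K of) the optimal polynomial approximant Q_n(1/f) is continuous, where H² \ {0} carries the H² norm topology and C(K) the sup-norm topology. -/
open MeasureTheory Filter Metric Polynomial

noncomputable section

/-- The Hardy space `H²`, modelled as the space `ℓ²(ℕ, ℂ)` of square-summable
Taylor-coefficient sequences: `f : H2` represents the holomorphic function
`z ↦ ∑ₖ f k * z ^ k` on the unit disc, and the `lp`-norm of `f` is its `H²` norm. -/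
abbrev H2 := lp (fun _ : ℕ => ℂ) 2

/-- Value at `z` of the holomorphic function with Taylor coefficients `f`. -/
def h2Val (f : H2) (z : ℂ) : ℂ := ∑' k, f k * z ^ k

/-- `n`-th Taylor coefficient of the product of a polynomial `q` with the power series
having coefficients `a`. -/
def coeffMul (q : Polynomial ℂ) (a : ℕ → ℂ) (n : ℕ) : ℂ :=
  ∑ j ∈ Finset.range (n + 1), q.coeff j * a (n - j)

/-- Taylor coefficients of `q·f − 1`. -/
def errSeq (q : Polynomial ℂ) (f : H2) (n : ℕ) : ℂ :=
  coeffMul q (fun k => f k) n - if n = 0 then 1 else 0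

/-- The `H²` norm `‖q·f − 1‖_{H²}`. -/
def h2ErrNorm (q : Polynomial ℂ) (f : H2) : ℝ :=
  Real.sqrt (∑' n, ‖errSeq q f n‖ ^ 2)

/-- `Q` is an optimal polynomial approximant of order `n` of `1/f`: it has degree at
most `n` and minimizes `‖q·f − 1‖_{H²}` over all polynomials `q` of degree at most `n`. -/
def IsOpa (n : ℕ) (f : H2) (Q : Polynomial ℂ) : Prop :=
  Q.degree ≤ (n : WithBot ℕ) ∧
    ∀ q : Polynomial ℂ, q.degree ≤ (n : WithBot ℕ) → h2ErrNorm Q f ≤ h2ErrNorm q f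

open Classical in
/-- The optimal polynomial approximant `Q_n(1/f)` (well defined whenever the minimizer
exists and is unique, which is the case for every `f ≠ 0`). -/
def opa (n : ℕ) (f : H2) : Polynomial ℂ :=
  if h : ∃! Q : Polynomial ℂ, IsOpa n f Q then h.choose else 0

/-- Sup-distance of two functions over a set `E` (the distance in `C(E)`). -/
def supDist (E : Set ℂ) (u v : ℂ → ℂ) : ℝ := ⨆ z : E, ‖u z - v z‖

/-- `f` has universal optimal polynomial approximants on `E`: every continuous function
on `E` is the uniform limit on `E` of a subsequence of the sequence `Q_n(1/f)`. -/
def HasUniversalOpa (E : Set ℂ) (f : H2) : Prop :=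
  ∀ g : ℂ → ℂ, ContinuousOn g E →
    ∃ m : ℕ → ℕ, StrictMono m ∧
      TendstoUniformlyOn (fun s z => (opa (m s) f).eval z) g atTop E

/-- `E ⊆ 𝕋` has arc-length (Lebesgue) measure zero. -/
def circleNull (E : Set ℂ) : Prop :=
  volume {θ : ℝ | Complex.exp (θ * Complex.I) ∈ E} = 0

namespace OpaAux

local notation "⟪" x ", " y "⟫" => inner (𝕜 := ℂ) x y

lemma two_toReal : (2 : ENNReal).toReal = 2 := by norm_num

/-- The `j`-th shift of a sequence. -/
def shFun (j : ℕ) (f : ℕ → ℂ) : ℕ → ℂ := fun m => if j ≤ m then f (m - j) else 0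

lemma shFun_add (j : ℕ) (f : ℕ → ℂ) (k : ℕ) : shFun j f (j + k) = f k := by
  simp [shFun, Nat.le_add_right]

lemma shFun_eq_zero (j : ℕ) (f : ℕ → ℂ) {m : ℕ} (hm : m ∉ Set.range (j + ·)) :
    shFun j f m = 0 := by
  rw [shFun, if_neg]
  intro h
  exact hm ⟨m - j, by show j + (m - j) = m; omega⟩

lemma memℓp_shFun (j : ℕ) (f : H2) : Memℓp (shFun j (⇑f)) 2 := by
  apply memℓp_gen
  rw [two_toReal]
  have hinj : Function.Injective (j + ·) := add_right_injective j
  have := (Function.Injective.summable_iff (f := fun m => ‖shFun j (⇑f) m‖ ^ (2:ℝ)) hinj ?_).mp ?_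
  · exact this
  · intro m hm
    simp [shFun_eq_zero j (⇑f) hm]
  · have hs : Summable fun k => ‖f k‖ ^ (2:ℝ) := by
      simpa [two_toReal] using (lp.memℓp f).summable (by rw [two_toReal]; norm_num)
    refine hs.congr fun k => ?_
    simp [Function.comp, shFun_add]

/-- The shift operator on `H²` as a linear isometry. -/
def sh (j : ℕ) : H2 →ₗᵢ[ℂ] H2 where
  toLinearMap :=
  { toFun := fun f => ⟨shFun j (⇑f), memℓp_shFun j f⟩
    map_add' := fun f g => by
      apply lp.ext
      funext m
      show shFun j (⇑(f + g)) m = shFun j (⇑f) m + shFun j (⇑g) m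
      simp only [lp.coeFn_add, Pi.add_apply, shFun]
      split <;> simp
    map_smul' := fun c f => by
      apply lp.ext
      funext m
      show shFun j (⇑(c • f)) m = c • shFun j (⇑f) m
      simp only [lp.coeFn_smul, Pi.smul_apply, shFun]
      split <;> simp }
  norm_map' := fun f => by
    have h2 : (0:ℝ) < (2 : ENNReal).toReal := by rw [two_toReal]; norm_num
    rw [lp.norm_eq_tsum_rpow h2, lp.norm_eq_tsum_rpow h2]
    have hinj : Function.Injective (j + ·) := add_right_injective j
    have key : ∑' m, ‖shFun j (⇑f) m‖ ^ (2:ENNReal).toReal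
        = ∑' i, ‖f i‖ ^ (2:ENNReal).toReal := by
      rw [← Function.Injective.tsum_eq hinj
        (f := fun m => ‖shFun j (⇑f) m‖ ^ (2:ENNReal).toReal)]
      · exact tsum_congr fun k => by simp [shFun_add]
      · intro m hm
        simp only [Function.mem_support] at hm
        by_contra hr
        exact hm (by rw [shFun_eq_zero j _ hr]; simp [two_toReal])
    exact congrArg (· ^ (1 / (2:ENNReal).toReal)) key

lemma sh_apply (j : ℕ) (f : H2) (m : ℕ) : (sh j f : ℕ → ℂ) m = shFun j (⇑f) m := rfl

/-- e₀ = (1, 0, 0, …). -/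
def e0 : H2 :=
  ⟨fun m => if m = 0 then 1 else 0, by
    apply memℓp_gen
    apply summable_of_ne_finset_zero (s := {0})
    intro m hm
    simp only [Finset.mem_singleton] at hm
    simp [hm]⟩

lemma e0_apply (m : ℕ) : (e0 : ℕ → ℂ) m = if m = 0 then 1 else 0 := rfl


/-! ### Linear combinations of shifts -/

/-- `T n f c = ∑ k, c k • S^k f`, the product of the polynomial with coefficients `c`
with the power series `f`. -/
def T (n : ℕ) (f : H2) (c : Fin (n+1) → ℂ) : H2 :=
  ∑ k : Fin (n+1), c k • sh (k : ℕ) f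

lemma T_coord (n : ℕ) (f : H2) (c : Fin (n+1) → ℂ) (m : ℕ) :
    (T n f c : ℕ → ℂ) m = ∑ k : Fin (n+1), c k * shFun (k : ℕ) (⇑f) m := by
  rw [T, lp.coeFn_sum]
  rw [Finset.sum_apply]
  refine Finset.sum_congr rfl fun k _ => ?_
  rw [lp.coeFn_smul, Pi.smul_apply]
  rfl

lemma exists_ne_zero {f : H2} (hf : f ≠ 0) : ∃ m, (f : ℕ → ℂ) m ≠ 0 := by
  by_contra h
  push_neg at h
  exact hf (lp.ext (funext fun m => by simpa using h m))

/-- Injectivity of `c ↦ T n f c` for `f ≠ 0`. -/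
lemma T_eq_zero (n : ℕ) {f : H2} (hf : f ≠ 0) {c : Fin (n+1) → ℂ}
    (hT : T n f c = 0) : c = 0 := by
  obtain ⟨m0, hm0⟩ := exists_ne_zero hf
  have hex : ∃ m, (f : ℕ → ℂ) m ≠ 0 := ⟨m0, hm0⟩
  set k0 := Nat.find hex with hk0
  have hfk0 : (f : ℕ → ℂ) k0 ≠ 0 := Nat.find_spec hex
  have hmin : ∀ m < k0, (f : ℕ → ℂ) m = 0 := fun m hm =>
    not_not.mp (Nat.find_min hex hm)
  have key : ∀ j : ℕ, ∀ hj : j < n + 1, c ⟨j, hj⟩ = 0 := by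
    intro j
    induction j using Nat.strong_induction_on with
    | _ j IH =>
      intro hj
      have hcoord : (T n f c : ℕ → ℂ) (j + k0) = 0 := by
        rw [hT]; exact congrFun (lp.coeFn_zero _ _) _
      rw [T_coord] at hcoord
      have hsum : ∑ k : Fin (n+1), c k * shFun (k : ℕ) (⇑f) (j + k0)
          = c ⟨j, hj⟩ * (f : ℕ → ℂ) k0 := by
        rw [Finset.sum_eq_single ⟨j, hj⟩]
        · simp [shFun, Nat.le_add_right]
        · intro k _ hk
          rcases lt_trichotomy (k : ℕ) j with h | h | h
          · rw [IH (k : ℕ) h k.isLt]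
            · simp
          · exact absurd (Fin.ext h) hk
          · rcases le_or_gt (k : ℕ) (j + k0) with h2 | h2
            · rw [shFun, if_pos h2, hmin (j + k0 - (k : ℕ)) (by omega)]
              simp
            · rw [shFun, if_neg (by omega)]
              simp
        · intro h
          exact absurd (Finset.mem_univ _) h
      rw [hsum] at hcoord
      exact (mul_eq_zero.mp hcoord).resolve_right hfk0
  funext k
  have := key (k : ℕ) k.isLt
  simpa using this

/-! ### Gram matrix and the explicit optimal coefficients -/

/-- Gram matrix of the shifted copies of `f`. -/
def gram (n : ℕ) (f : H2) : Matrix (Fin (n+1)) (Fin (n+1)) ℂ :=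
  Matrix.of fun j k => ⟪sh (j : ℕ) f, sh (k : ℕ) f⟫

/-- Right-hand side vector `⟨S^j f, e₀⟩`. -/
def bVec (n : ℕ) (f : H2) : Fin (n+1) → ℂ :=
  fun j => ⟪sh (j : ℕ) f, e0⟫

lemma inner_T (n : ℕ) (f : H2) (c : Fin (n+1) → ℂ) (j : ℕ) :
    ⟪sh j f, T n f c⟫ = ∑ k : Fin (n+1), c k * ⟪sh j f, sh (k : ℕ) f⟫ := by
  rw [T, inner_sum]
  exact Finset.sum_congr rfl fun k _ => inner_smul_right _ _ _

lemma T_inner (n : ℕ) (f : H2) (c : Fin (n+1) → ℂ) (x : H2) :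
    ⟪T n f c, x⟫ = ∑ k : Fin (n+1), (starRingEnd ℂ) (c k) * ⟪sh (k : ℕ) f, x⟫ := by
  rw [T, sum_inner]
  exact Finset.sum_congr rfl fun k _ => inner_smul_left _ _ _

lemma gram_mulVec (n : ℕ) (f : H2) (c : Fin (n+1) → ℂ) (j : Fin (n+1)) :
    (gram n f).mulVec c j = ⟪sh (j : ℕ) f, T n f c⟫ := by
  rw [inner_T, Matrix.mulVec]
  simp [gram, dotProduct, mul_comm]

lemma gram_det_ne_zero (n : ℕ) {f : H2} (hf : f ≠ 0) : (gram n f).det ≠ 0 := by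
  intro hdet
  obtain ⟨v, hv, hmv⟩ := (Matrix.exists_mulVec_eq_zero_iff).mpr hdet
  have hTv : T n f v = 0 := by
    have hin : ⟪T n f v, T n f v⟫ = 0 := by
      rw [T_inner]
      have : ∀ k : Fin (n+1), ⟪sh (k : ℕ) f, T n f v⟫ = 0 := fun k => by
        rw [← gram_mulVec, hmv]
        rfl
      simp [this]
    exact inner_self_eq_zero.mp hin
  exact hv (T_eq_zero n hf hTv)

/-- The optimal coefficient vector. -/
def cStar (n : ℕ) (f : H2) : Fin (n+1) → ℂ :=
  (gram n f)⁻¹.mulVec (bVec n f)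

lemma gram_mulVec_cStar (n : ℕ) {f : H2} (hf : f ≠ 0) :
    (gram n f).mulVec (cStar n f) = bVec n f := by
  rw [cStar, Matrix.mulVec_mulVec,
    Matrix.mul_nonsing_inv _ (isUnit_iff_ne_zero.mpr (gram_det_ne_zero n hf)),
    Matrix.one_mulVec]

/-- Orthogonality of the optimal error to each shifted copy. -/
lemma inner_err_zero (n : ℕ) {f : H2} (hf : f ≠ 0) (j : Fin (n+1)) :
    ⟪sh (j : ℕ) f, T n f (cStar n f) - e0⟫ = 0 := by
  rw [inner_sub_right, ← gram_mulVec, gram_mulVec_cStar n hf]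
  simp [bVec]


/-! ### Relating `h2ErrNorm` to the Hilbert space norm -/

/-- Coefficient vector of a polynomial. -/
def coeffVec (n : ℕ) (q : Polynomial ℂ) : Fin (n+1) → ℂ := fun j => q.coeff (j : ℕ)

lemma coeffMul_eq (n : ℕ) (q : Polynomial ℂ) (hq : q.degree ≤ (n : WithBot ℕ))
    (f : H2) (m : ℕ) :
    coeffMul q (fun k => f k) m = ∑ k : Fin (n+1), coeffVec n q k * shFun (k : ℕ) (⇑f) m := by
  set g : ℕ → ℂ := fun j => if j ≤ m then q.coeff j * (f : ℕ → ℂ) (m - j) else 0 with hg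
  have h1 : coeffMul q (fun k => f k) m = ∑ j ∈ Finset.range (m + 1), g j := by
    rw [coeffMul]
    refine Finset.sum_congr rfl fun j hj => ?_
    rw [Finset.mem_range] at hj
    rw [hg]
    simp only [if_pos (Nat.lt_succ_iff.mp hj)]
  have h2 : ∑ k : Fin (n+1), coeffVec n q k * shFun (k : ℕ) (⇑f) m
      = ∑ j ∈ Finset.range (n + 1), g j := by
    rw [Finset.sum_range fun j => g j]
    refine Finset.sum_congr rfl fun k _ => ?_
    rw [hg, coeffVec, shFun]
    split <;> simp [*]
  rw [h1, h2]
  set N := max m n + 1 with hN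
  have e1 : ∑ j ∈ Finset.range (m + 1), g j = ∑ j ∈ Finset.range N, g j := by
    refine Finset.sum_subset (Finset.range_subset_range.mpr (by omega)) fun j _ hj => ?_
    rw [Finset.mem_range] at hj
    rw [hg]
    exact if_neg (by omega)
  have e2 : ∑ j ∈ Finset.range (n + 1), g j = ∑ j ∈ Finset.range N, g j := by
    refine Finset.sum_subset (Finset.range_subset_range.mpr (by omega)) fun j hj' hj => ?_
    rw [Finset.mem_range] at hj
    have hcoeff : q.coeff j = 0 :=
      Polynomial.coeff_eq_zero_of_degree_lt (lt_of_le_of_lt hq (by exact_mod_cast by omega))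
    rw [hg]
    simp [hcoeff]
  rw [e1, e2]

lemma errSeq_eq (n : ℕ) (q : Polynomial ℂ) (hq : q.degree ≤ (n : WithBot ℕ))
    (f : H2) (m : ℕ) :
    errSeq q f m = ((T n f (coeffVec n q) - e0 : H2) : ℕ → ℂ) m := by
  rw [lp.coeFn_sub, Pi.sub_apply, errSeq, coeffMul_eq n q hq f m, T_coord, e0_apply]

lemma norm_eq_sqrt (x : H2) : ‖x‖ = Real.sqrt (∑' m, ‖(x : ℕ → ℂ) m‖ ^ 2) := by
  have h2 : (0:ℝ) < (2 : ENNReal).toReal := by rw [two_toReal]; norm_num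
  have hts : ∑' m, ‖(x : ℕ → ℂ) m‖ ^ ((2:ENNReal).toReal)
      = ∑' m, ‖(x : ℕ → ℂ) m‖ ^ 2 := by
    refine tsum_congr fun m => ?_
    rw [two_toReal, ← Real.rpow_natCast ‖(x : ℕ → ℂ) m‖ 2]
    norm_num
  rw [lp.norm_eq_tsum_rpow h2 x, hts, Real.sqrt_eq_rpow, two_toReal]

lemma h2ErrNorm_eq (n : ℕ) (q : Polynomial ℂ) (hq : q.degree ≤ (n : WithBot ℕ)) (f : H2) :
    h2ErrNorm q f = ‖T n f (coeffVec n q) - e0‖ := by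
  rw [h2ErrNorm, norm_eq_sqrt]
  congr 1
  exact tsum_congr fun m => by rw [errSeq_eq n q hq f m]

/-! ### The optimal polynomial -/

/-- The optimal polynomial approximant, defined by the explicit formula. -/
def QStar (n : ℕ) (f : H2) : Polynomial ℂ :=
  ∑ j : Fin (n+1), Polynomial.C (cStar n f j) * Polynomial.X ^ (j : ℕ)

lemma QStar_coeff (n : ℕ) (f : H2) (k : ℕ) :
    (QStar n f).coeff k = if h : k < n + 1 then cStar n f ⟨k, h⟩ else 0 := by
  rw [QStar, Polynomial.finset_sum_coeff]
  split
  · next h =>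
    rw [Finset.sum_eq_single (⟨k, h⟩ : Fin (n+1))]
    · simp
    · intro j _ hj
      rw [Polynomial.coeff_C_mul, Polynomial.coeff_X_pow, if_neg (fun hc => hj (Fin.ext hc.symm))]
      simp
    · intro h'
      exact absurd (Finset.mem_univ _) h'
  · next h =>
    refine Finset.sum_eq_zero fun j _ => ?_
    rw [Polynomial.coeff_C_mul, Polynomial.coeff_X_pow, if_neg (by omega)]
    simp

lemma QStar_degree_le (n : ℕ) (f : H2) : (QStar n f).degree ≤ (n : WithBot ℕ) := by
  refine le_trans (Polynomial.degree_sum_le _ _) ?_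
  refine Finset.sup_le fun j _ => ?_
  refine le_trans (Polynomial.degree_C_mul_X_pow_le _ _) ?_
  exact_mod_cast Nat.cast_le.mpr (Nat.lt_succ_iff.mp j.isLt)

lemma coeffVec_QStar (n : ℕ) (f : H2) : coeffVec n (QStar n f) = cStar n f := by
  funext j
  rw [coeffVec, QStar_coeff, dif_pos j.isLt]


/-! ### Optimality and uniqueness -/

lemma T_add (n : ℕ) (f : H2) (c d : Fin (n+1) → ℂ) :
    T n f (c + d) = T n f c + T n f d := by
  rw [T, T, T, ← Finset.sum_add_distrib]
  exact Finset.sum_congr rfl fun k _ => by rw [Pi.add_apply, add_smul]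

lemma err_decomp (n : ℕ) {f : H2} (hf : f ≠ 0) (q : Polynomial ℂ)
    (hq : q.degree ≤ (n : WithBot ℕ)) :
    h2ErrNorm q f ^ 2 = h2ErrNorm (QStar n f) f ^ 2
      + ‖T n f (coeffVec n q - cStar n f)‖ ^ 2 := by
  rw [h2ErrNorm_eq n q hq, h2ErrNorm_eq n (QStar n f) (QStar_degree_le n f), coeffVec_QStar]
  have hdec : T n f (coeffVec n q) - e0
      = (T n f (cStar n f) - e0) + T n f (coeffVec n q - cStar n f) := by
    have : coeffVec n q = cStar n f + (coeffVec n q - cStar n f) := by ring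
    rw [this, T_add]
    abel_nf
  rw [hdec]
  have horth : ⟪T n f (cStar n f) - e0, T n f (coeffVec n q - cStar n f)⟫ = 0 := by
    have hsum : ⟪T n f (coeffVec n q - cStar n f), T n f (cStar n f) - e0⟫ = 0 := by
      rw [T_inner]
      exact Finset.sum_eq_zero fun k _ => by rw [inner_err_zero n hf k, mul_zero]
    rw [← inner_conj_symm, hsum, map_zero]
  rw [@norm_add_sq ℂ _ _ _ _ _ _, horth]
  simp

lemma h2ErrNorm_nonneg (q : Polynomial ℂ) (f : H2) : 0 ≤ h2ErrNorm q f :=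
  Real.sqrt_nonneg _

lemma isOpa_QStar (n : ℕ) {f : H2} (hf : f ≠ 0) : IsOpa n f (QStar n f) := by
  refine ⟨QStar_degree_le n f, fun q hq => ?_⟩
  have hsq : h2ErrNorm (QStar n f) f ^ 2 ≤ h2ErrNorm q f ^ 2 := by
    rw [err_decomp n hf q hq]
    nlinarith [sq_nonneg ‖T n f (coeffVec n q - cStar n f)‖]
  have := Real.sqrt_le_sqrt hsq
  rwa [Real.sqrt_sq (h2ErrNorm_nonneg _ _), Real.sqrt_sq (h2ErrNorm_nonneg _ _)] at this

lemma isOpa_unique (n : ℕ) {f : H2} (hf : f ≠ 0) {q : Polynomial ℂ}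
    (hq : IsOpa n f q) : q = QStar n f := by
  have heq : h2ErrNorm q f = h2ErrNorm (QStar n f) f :=
    le_antisymm (hq.2 _ (QStar_degree_le n f)) ((isOpa_QStar n hf).2 _ hq.1)
  have hz : ‖T n f (coeffVec n q - cStar n f)‖ ^ 2 = 0 := by
    have := err_decomp n hf q hq.1
    rw [heq] at this
    linarith
  have hT0 : T n f (coeffVec n q - cStar n f) = 0 := by
    rw [pow_eq_zero_iff (by norm_num), norm_eq_zero] at hz
    exact hz
  have hc : coeffVec n q - cStar n f = 0 := T_eq_zero n hf hT0
  have hcv : coeffVec n q = cStar n f := by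
    funext k
    have := congrFun hc k
    simpa [sub_eq_zero] using this
  refine Polynomial.ext fun k => ?_
  by_cases hk : k < n + 1
  · have := congrFun hcv ⟨k, hk⟩
    rw [coeffVec] at this
    rw [QStar_coeff, dif_pos hk]
    exact this
  · rw [Polynomial.coeff_eq_zero_of_degree_lt
      (lt_of_le_of_lt hq.1 (by exact_mod_cast by omega)),
      Polynomial.coeff_eq_zero_of_degree_lt
      (lt_of_le_of_lt (QStar_degree_le n f) (by exact_mod_cast by omega))]

lemma existsUnique_isOpa (n : ℕ) {f : H2} (hf : f ≠ 0) :
    ∃! Q : Polynomial ℂ, IsOpa n f Q :=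
  ⟨QStar n f, isOpa_QStar n hf, fun q hq => isOpa_unique n hf hq⟩

lemma opa_eq (n : ℕ) {f : H2} (hf : f ≠ 0) : opa n f = QStar n f := by
  rw [opa, dif_pos (existsUnique_isOpa n hf)]
  exact ((existsUnique_isOpa n hf).choose_spec.2 _ (isOpa_QStar n hf)).symm


/-! ### Continuity -/

lemma continuous_gram (n : ℕ) :
    Continuous fun f : {f : H2 // f ≠ 0} => gram n f.1 := by
  refine continuous_matrix fun j k => ?_
  exact Continuous.inner ((sh (j : ℕ)).continuous.comp continuous_subtype_val)
    ((sh (k : ℕ)).continuous.comp continuous_subtype_val)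

lemma continuous_bVec (n : ℕ) (j : Fin (n+1)) :
    Continuous fun f : {f : H2 // f ≠ 0} => bVec n f.1 j :=
  Continuous.inner ((sh (j : ℕ)).continuous.comp continuous_subtype_val) continuous_const

lemma cStar_eq (n : ℕ) (f : H2) (j : Fin (n+1)) :
    cStar n f j = Ring.inverse (gram n f).det
      * ((gram n f).adjugate.mulVec (bVec n f) j) := by
  rw [cStar, Matrix.inv_def, Matrix.smul_mulVec, Pi.smul_apply, smul_eq_mul]

lemma continuous_cStar (n : ℕ) (j : Fin (n+1)) :
    Continuous fun f : {f : H2 // f ≠ 0} => cStar n f.1 j := by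
  have heq : (fun f : {f : H2 // f ≠ 0} => cStar n f.1 j)
      = fun f : {f : H2 // f ≠ 0} => ((gram n f.1).det)⁻¹
          * ((gram n f.1).adjugate.mulVec (bVec n f.1) j) := by
    funext f
    rw [cStar_eq, Ring.inverse_eq_inv]
  rw [heq]
  refine Continuous.mul ?_ ?_
  · exact Continuous.inv₀ (Continuous.matrix_det (continuous_gram n))
      fun f => gram_det_ne_zero n f.2
  · have : ∀ f : {f : H2 // f ≠ 0}, (gram n f.1).adjugate.mulVec (bVec n f.1) j
        = ∑ k : Fin (n+1), (gram n f.1).adjugate j k * bVec n f.1 k := fun f => rfl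
    simp only [this]
    exact continuous_finset_sum _ fun k _ =>
      (Continuous.matrix_elem (Continuous.matrix_adjugate (continuous_gram n)) j k).mul
        (continuous_bVec n k)

end OpaAux

/-- For fixed `n` and compact `K ⊆ ℂ`, the map `f ↦ Q_n(1/f)|_K` from
`H² \ {0}` (with the `H²` norm topology) to `C(K)` (with the sup-norm topology, which
for compact `K` is the topology of `C(K, ℂ)`) is continuous. -/
theorem opa_continuousOn (n : ℕ) (K : Set ℂ) (hK : IsCompact K) :
    Continuous fun f : {f : H2 // f ≠ 0} => (opa n f.1).toContinuousMapOn K := by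
  haveI : CompactSpace K := isCompact_iff_compactSpace.mp hK
  have heq : (fun f : {f : H2 // f ≠ 0} => (opa n f.1).toContinuousMapOn K)
      = fun f : {f : H2 // f ≠ 0} =>
          ∑ j : Fin (n+1), OpaAux.cStar n f.1 j •
            ((Polynomial.X ^ (j : ℕ) : Polynomial ℂ).toContinuousMapOn K) := by
    funext f
    ext z
    rw [OpaAux.opa_eq n f.2, OpaAux.QStar]
    simp [Polynomial.toContinuousMapOn, Polynomial.toContinuousMap, Polynomial.eval_finset_sum]
  rw [heq]
  exact continuous_finset_sum _ fun j _ =>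
    (OpaAux.continuous_cStar n j).smul continuous_const

end
end

section
/- Let E ⊆ 𝕋 be closed, let f ∈ H² be not identically zero, and let g be an inner function in H² (i.e., a holomorphic function on 𝔻 such that multiplication by g is an isometry of H²) with g(0) ≠ 0. Then f has universal optimal polynomial approximants on E if and only if fg has universal optimal polynomial approximants on E. -/
open MeasureTheory Filter Metric Polynomial ENNReal

noncomputable section

/-- Coefficients of the product of the power series with coefficients `g` and the power
series with coefficients `a` (Cauchy product). -/
def convSeq (g : ℕ → ℂ) (a : ℕ → ℂ) (n : ℕ) : ℂ :=
  ∑ j ∈ Finset.range (n + 1), g j * a (n - j)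

set_option linter.unusedSectionVars false

namespace UA
lemma convSeq_eq_coeff (g a : ℕ → ℂ) (n : ℕ) :
    convSeq g a n = PowerSeries.coeff n (PowerSeries.mk g * PowerSeries.mk a) := by
  rw [PowerSeries.coeff_mul, Finset.Nat.sum_antidiagonal_eq_sum_range_succ_mk]
  simp [convSeq]

lemma mk_convSeq (g a : ℕ → ℂ) :
    PowerSeries.mk (convSeq g a) = PowerSeries.mk g * PowerSeries.mk a :=
  PowerSeries.ext fun n => by simp [PowerSeries.coeff_mk, convSeq_eq_coeff]

lemma coeffMul_eq_convSeq (q : ℂ[X]) (a : ℕ → ℂ) :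
    coeffMul q a = convSeq (fun k => q.coeff k) a := rfl

lemma coeffMul_convSeq (q : ℂ[X]) (g a : ℕ → ℂ) :
    coeffMul q (convSeq g a) = convSeq g (coeffMul q a) := by
  funext n
  rw [coeffMul_eq_convSeq, coeffMul_eq_convSeq, convSeq_eq_coeff, convSeq_eq_coeff,
    mk_convSeq, mk_convSeq, mul_left_comm]

lemma coeffMul_smul (c : ℂ) (q : ℂ[X]) (a : ℕ → ℂ) (n : ℕ) :
    coeffMul (c • q) a n = c * coeffMul q a n := by
  simp [coeffMul, Polynomial.coeff_smul, smul_eq_mul, Finset.mul_sum, mul_assoc]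

def shiftSeq (j : ℕ) (f : ℕ → ℂ) (n : ℕ) : ℂ := if j ≤ n then f (n - j) else 0

lemma memℓp_shift (f : H2) (j : ℕ) : Memℓp (shiftSeq j (fun k => f k)) 2 := by
  apply memℓp_gen
  have key : Summable (fun n => ‖f n‖ ^ (2 : ℝ≥0∞).toReal) :=
    (lp.memℓp f).summable (by norm_num)
  rw [← summable_nat_add_iff j]
  convert key using 2 with n
  · rfl
  simp [shiftSeq]

lemma coeffMul_memℓp (q : ℂ[X]) (f : H2) : Memℓp (coeffMul q (fun k => f k)) 2 := by
  have hrw : coeffMul q (fun k => f k) =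
      fun n => ∑ j ∈ Finset.range (q.natDegree + 1),
        ((q.coeff j • shiftSeq j (fun k => f k)) n) := by
    funext n
    have h1 : coeffMul q (fun k => f k) n
        = ∑ j ∈ Finset.range (n + 1), q.coeff j * shiftSeq j (fun k => f k) n := by
      refine Finset.sum_congr rfl fun j hj => ?_
      have : j ≤ n := Nat.lt_succ_iff.mp (Finset.mem_range.mp hj)
      simp [shiftSeq, this]
    have h2 : ∑ j ∈ Finset.range (n + 1), q.coeff j * shiftSeq j (fun k => f k) n
        = ∑ j ∈ Finset.range (max (n + 1) (q.natDegree + 1)),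
            q.coeff j * shiftSeq j (fun k => f k) n := by
      refine Finset.sum_subset (Finset.range_subset_range.mpr (le_max_left _ _)) ?_
      intro j _ hj
      have hn : n < j := by simpa using Finset.mem_range.not.mp hj
      simp [shiftSeq, Nat.not_le.mpr hn]
    have h3 : ∑ j ∈ Finset.range (q.natDegree + 1),
            q.coeff j * shiftSeq j (fun k => f k) n
        = ∑ j ∈ Finset.range (max (n + 1) (q.natDegree + 1)),
            q.coeff j * shiftSeq j (fun k => f k) n := by
      refine Finset.sum_subset (Finset.range_subset_range.mpr (le_max_right _ _)) ?_
      intro j _ hj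
      have hd : q.natDegree < j := by simpa using Finset.mem_range.not.mp hj
      simp [Polynomial.coeff_eq_zero_of_natDegree_lt hd]
    rw [h1, h2, ← h3]
    simp [smul_eq_mul]
  rw [hrw]
  exact Memℓp.finset_sum _ fun j _ => (memℓp_shift f j).const_smul (q.coeff j)

local notation "⟪" x ", " y "⟫" => @inner ℂ _ _ x y

def E0 : H2 := lp.single 2 0 1

lemma E0_apply (n : ℕ) : (E0 : H2) n = if n = 0 then 1 else 0 := by
  rcases eq_or_ne n 0 with h | h
  · subst h; simp [E0, lp.single_apply_self]
  · simp [E0, lp.single_apply_ne _ _ _ h, h]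

lemma norm_E0 : ‖(E0 : H2)‖ = 1 := by
  have := lp.norm_single (p := (2 : ℝ≥0∞)) (E := fun _ : ℕ => ℂ) (by norm_num)
    0 (1 : ℂ)
  simpa [E0] using this

lemma inner_E0_right (x : H2) : ⟪x, E0⟫ = (starRingEnd ℂ) (x 0) := by
  rw [E0, lp.inner_single_right]
  simp [RCLike.inner_apply]

def errMem (q : ℂ[X]) (F : H2) : Memℓp (errSeq q F) 2 := by
  have : errSeq q F = (coeffMul q (fun k => F k)) - (fun n => (E0 : H2) n) := by
    funext n; simp [errSeq, E0_apply]
  rw [this]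
  exact (coeffMul_memℓp q F).sub (by simpa using lp.memℓp E0)

def errElt (q : ℂ[X]) (F : H2) : H2 := ⟨errSeq q F, errMem q F⟩

lemma errElt_apply (q : ℂ[X]) (F : H2) (n : ℕ) : (errElt q F) n = errSeq q F n := rfl

lemma h2ErrNorm_eq (q : ℂ[X]) (F : H2) : h2ErrNorm q F = ‖errElt q F‖ := by
  rw [lp.norm_eq_tsum_rpow (by norm_num : 0 < (2 : ℝ≥0∞).toReal), h2ErrNorm]
  rw [Real.sqrt_eq_rpow]
  have ht : (2 : ℝ≥0∞).toReal = 2 := by norm_num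
  rw [ht]
  congr 1
  · congr 1
    funext n
    rw [errElt_apply, ← Real.rpow_natCast ‖errSeq q F n‖ 2]
    norm_num


section G
variable (g : ℕ → ℂ) (hmem : ∀ h : H2, Memℓp (convSeq g (fun k => h k)) 2)
  (hiso : ∀ h : H2, ‖(⟨convSeq g (fun k => h k), hmem h⟩ : H2)‖ = ‖h‖)

def Gmap : H2 →ₗᵢ[ℂ] H2 where
  toFun h := ⟨convSeq g (fun k => h k), hmem h⟩
  map_add' x y := by
    apply lp.ext
    funext n
    simp [convSeq, lp.coeFn_add, Pi.add_apply, mul_add, Finset.sum_add_distrib]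
    rfl
  map_smul' c x := by
    apply lp.ext
    funext n
    simp [convSeq, lp.coeFn_smul, Pi.smul_apply, smul_eq_mul, Finset.mul_sum]
    ring_nf
    exact Finset.sum_congr rfl fun j _ => by ring
  norm_map' := hiso

lemma Gmap_apply (h : H2) (n : ℕ) : (Gmap g hmem hiso h) n = convSeq g (fun k => h k) n := rfl

lemma key_norm (A : H2) :
    ‖Gmap g hmem hiso A - E0‖ ^ 2
      = ‖A - (starRingEnd ℂ) (g 0) • E0‖ ^ 2 + (1 - ‖g 0‖ ^ 2) := by
  have h1 := @norm_sub_sq ℂ _ _ _ _ (Gmap g hmem hiso A) E0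
  have h2 := @norm_sub_sq ℂ _ _ _ _ A ((starRingEnd ℂ) (g 0) • E0)
  have hGA : ‖Gmap g hmem hiso A‖ = ‖A‖ := (Gmap g hmem hiso).norm_map A
  have hGA0 : (Gmap g hmem hiso A) 0 = g 0 * A 0 := by
    rw [Gmap_apply]; simp [convSeq]
  have hi1 : ⟪Gmap g hmem hiso A, E0⟫ = (starRingEnd ℂ) (g 0 * A 0) := by
    rw [inner_E0_right, hGA0]
  have hi2 : ⟪A, (starRingEnd ℂ) (g 0) • E0⟫ = (starRingEnd ℂ) (g 0 * A 0) := by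
    rw [inner_smul_right, inner_E0_right]
    rw [← map_mul]
  have hns : ‖(starRingEnd ℂ) (g 0) • E0‖ = ‖g 0‖ := by
    rw [norm_smul, norm_E0, mul_one]
    simp
  rw [h1, h2, hGA, hi1, hi2, hns, norm_E0]
  ring
end G
lemma h2ErrNorm_nonneg (q : ℂ[X]) (F : H2) : 0 ≤ h2ErrNorm q F := Real.sqrt_nonneg _

lemma errnorm_le_iff (Q q : ℂ[X]) (F : H2) :
    h2ErrNorm Q F ≤ h2ErrNorm q F ↔ h2ErrNorm Q F ^ 2 ≤ h2ErrNorm q F ^ 2 := by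
  constructor
  · intro h; exact pow_le_pow_left₀ (h2ErrNorm_nonneg Q F) h 2
  · intro h
    nlinarith [h2ErrNorm_nonneg Q F, h2ErrNorm_nonneg q F]

lemma degree_smul_eq {c : ℂ} (hc : c ≠ 0) (p : ℂ[X]) : (c • p).degree = p.degree := by
  rw [Polynomial.smul_eq_C_mul, Polynomial.degree_C_mul hc]


section G2
variable (g : ℕ → ℂ) (hmem : ∀ h : H2, Memℓp (convSeq g (fun k => h k)) 2)
  (hiso : ∀ h : H2, ‖(⟨convSeq g (fun k => h k), hmem h⟩ : H2)‖ = ‖h‖)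
variable (f : H2) (hg0 : g 0 ≠ 0)
include hiso hg0

/-- The master identity. -/
lemma master (q : ℂ[X]) :
    h2ErrNorm q (⟨convSeq g (fun k => f k), hmem f⟩ : H2) ^ 2
      = ‖g 0‖ ^ 2 * h2ErrNorm (((starRingEnd ℂ) (g 0))⁻¹ • q) f ^ 2 + (1 - ‖g 0‖ ^ 2) := by
  set C : ℂ := (starRingEnd ℂ) (g 0) with hC
  have hCne : C ≠ 0 := by simpa [hC] using hg0
  set A : H2 := ⟨coeffMul q (fun k => f k), coeffMul_memℓp q f⟩ with hA
  have h1 : errElt q (⟨convSeq g (fun k => f k), hmem f⟩ : H2) = Gmap g hmem hiso A - E0 := by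
    apply lp.ext
    funext n
    have lhs : (errElt q (⟨convSeq g (fun k => f k), hmem f⟩ : H2)) n
        = convSeq g (coeffMul q (fun k => f k)) n - (if n = 0 then 1 else 0) := by
      show errSeq q _ n = _
      rw [errSeq]
      congr 1
      show coeffMul q (convSeq g (fun k => f k)) n = _
      rw [coeffMul_convSeq]
    have rhs : (Gmap g hmem hiso A - E0) n
        = convSeq g (coeffMul q (fun k => f k)) n - (if n = 0 then 1 else 0) := by
      rw [lp.coeFn_sub, Pi.sub_apply, Gmap_apply, E0_apply]
    rw [lhs, rhs]
  have h2 : A - C • E0 = C • errElt (C⁻¹ • q) f := by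
    apply lp.ext
    funext n
    rw [lp.coeFn_sub, Pi.sub_apply, lp.coeFn_smul, lp.coeFn_smul, Pi.smul_apply, Pi.smul_apply]
    show coeffMul q (fun k => f k) n - C • (E0 : H2) n = C • errSeq (C⁻¹ • q) f n
    rw [E0_apply, errSeq, coeffMul_smul]
    field_simp
    rw [smul_eq_mul, smul_eq_mul, mul_div_cancel₀ _ hCne]
  rw [h2ErrNorm_eq, h1, key_norm, h2, norm_smul, h2ErrNorm_eq]
  have : ‖C‖ = ‖g 0‖ := by simp [hC]
  rw [this, mul_pow]

lemma isOpa_iff (n : ℕ) (Q : ℂ[X]) :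
    IsOpa n (⟨convSeq g (fun k => f k), hmem f⟩ : H2) Q
      ↔ IsOpa n f (((starRingEnd ℂ) (g 0))⁻¹ • Q) := by
  set C : ℂ := (starRingEnd ℂ) (g 0) with hC
  have hCne : C ≠ 0 := by simpa [hC] using hg0
  have hg2 : 0 < ‖g 0‖ ^ 2 := pow_pos (norm_pos_iff.mpr hg0) 2
  have hcmp : ∀ a b : ℂ[X], h2ErrNorm a (⟨convSeq g (fun k => f k), hmem f⟩ : H2)
      ≤ h2ErrNorm b (⟨convSeq g (fun k => f k), hmem f⟩ : H2)
      ↔ h2ErrNorm (C⁻¹ • a) f ≤ h2ErrNorm (C⁻¹ • b) f := by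
    intro a b
    rw [errnorm_le_iff, errnorm_le_iff, master g hmem hiso f hg0, master g hmem hiso f hg0]
    constructor
    · intro h; nlinarith
    · intro h; nlinarith
  constructor
  · rintro ⟨hd, hmin⟩
    refine ⟨by rwa [degree_smul_eq (inv_ne_zero hCne)], fun q hq => ?_⟩
    have hq' : (C • q).degree ≤ (n : WithBot ℕ) := by rwa [degree_smul_eq hCne]
    have := (hcmp Q (C • q)).mp (hmin (C • q) hq')
    rwa [smul_smul, inv_mul_cancel₀ hCne, one_smul] at this
  · rintro ⟨hd, hmin⟩
    refine ⟨by rwa [degree_smul_eq (inv_ne_zero hCne)] at hd, fun q hq => ?_⟩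
    rw [hcmp Q q]
    exact hmin (C⁻¹ • q) (by rwa [degree_smul_eq (inv_ne_zero hCne)])

lemma opa_eq (n : ℕ) :
    opa n (⟨convSeq g (fun k => f k), hmem f⟩ : H2) = (starRingEnd ℂ) (g 0) • opa n f := by
  classical
  set C : ℂ := (starRingEnd ℂ) (g 0) with hC
  have hCne : C ≠ 0 := by simpa [hC] using hg0
  have hinv : ∀ p : ℂ[X], C⁻¹ • (C • p) = p := fun p => by
    rw [smul_smul, inv_mul_cancel₀ hCne, one_smul]
  have hinv' : ∀ p : ℂ[X], C • (C⁻¹ • p) = p := fun p => by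
    rw [smul_smul, mul_inv_cancel₀ hCne, one_smul]
  by_cases h1 : ∃! Q : ℂ[X], IsOpa n (⟨convSeq g (fun k => f k), hmem f⟩ : H2) Q
  · have h2 : ∃! Q : ℂ[X], IsOpa n f Q := by
      obtain ⟨Q, hQ, hu⟩ := h1
      refine ⟨C⁻¹ • Q, (isOpa_iff g hmem hiso f hg0 n Q).mp hQ, fun y hy => ?_⟩
      have : C • y = Q := by
        refine hu (C • y) ?_
        show IsOpa n (⟨convSeq g (fun k => f k), hmem f⟩ : H2) (C • y)
        rw [isOpa_iff g hmem hiso f hg0, hinv]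
        exact hy
      rw [← this, hinv]
    rw [opa, dif_pos h1, opa, dif_pos h2]
    have hc2 : IsOpa n f h2.choose := h2.choose_spec.1
    have : IsOpa n (⟨convSeq g (fun k => f k), hmem f⟩ : H2) (C • h2.choose) := by
      rw [isOpa_iff g hmem hiso f hg0, hinv]
      exact hc2
    exact (h1.choose_spec.2 _ this).symm
  · have h2 : ¬ ∃! Q : ℂ[X], IsOpa n f Q := by
      intro h2
      apply h1
      obtain ⟨Q, hQ, hu⟩ := h2
      refine ⟨C • Q, ?_, fun y hy => ?_⟩
      · show IsOpa n (⟨convSeq g (fun k => f k), hmem f⟩ : H2) (C • Q)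
        rw [isOpa_iff g hmem hiso f hg0, hinv]; exact hQ
      · have hy' : IsOpa n (⟨convSeq g (fun k => f k), hmem f⟩ : H2) y := hy
        have : C⁻¹ • y = Q := hu (C⁻¹ • y) ((isOpa_iff g hmem hiso f hg0 n y).mp hy')
        rw [← this, hinv']
    rw [opa, dif_neg h1, opa, dif_neg h2, smul_zero]
end G2

lemma transfer (F₁ F₂ : H2) (c : ℂ) (hc : c ≠ 0)
    (hrel : ∀ n, opa n F₂ = c • opa n F₁) (E : Set ℂ) :
    HasUniversalOpa E F₁ → HasUniversalOpa E F₂ := by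
  intro H t ht
  obtain ⟨m, hm, hconv⟩ := H (fun z => c⁻¹ * t z) (continuousOn_const.mul ht)
  refine ⟨m, hm, ?_⟩
  have heq : (fun s z => (opa (m s) F₂).eval z) = fun s z => c * (opa (m s) F₁).eval z := by
    funext s z
    rw [hrel]
    simp [Polynomial.eval_smul, smul_eq_mul]
  rw [heq, Metric.tendstoUniformlyOn_iff] at *
  intro ε hε
  have hcn : 0 < ‖c‖ := norm_pos_iff.mpr hc
  filter_upwards [hconv (ε / ‖c‖) (by positivity)] with s hs z hz
  have h1 := hs z hz
  rw [dist_eq_norm] at h1 ⊢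
  have h2 : t z - c * (opa (m s) F₁).eval z = c * ((c⁻¹ * t z) - (opa (m s) F₁).eval z) := by
    field_simp
  rw [h2, norm_mul]
  calc ‖c‖ * ‖c⁻¹ * t z - (opa (m s) F₁).eval z‖ < ‖c‖ * (ε / ‖c‖) :=
        mul_lt_mul_of_pos_left h1 hcn
    _ = ε := by rw [mul_comm, div_mul_cancel₀ ε (ne_of_gt hcn)]

end UA

/-- Let `E ⊆ 𝕋` be closed, `f ∈ H²` nonzero, and `g` inner
(multiplication by `g` is an isometry of `H²`; `g` is given by its Taylor-coefficient
sequence, so that `g(0) = g 0`) with `g 0 ≠ 0`. Then `f` has universal optimal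
polynomial approximants on `E` iff `fg` does. -/
theorem universalOpa_iff_inner_multiple (E : Set ℂ) (hE : E ⊆ sphere (0 : ℂ) 1)
    (hEclosed : IsClosed E) (f : H2) (hf : f ≠ 0) (g : ℕ → ℂ) (hg0 : g 0 ≠ 0)
    (hmem : ∀ h : H2, Memℓp (convSeq g (fun k => h k)) 2)
    (hiso : ∀ h : H2, ‖(⟨convSeq g (fun k => h k), hmem h⟩ : H2)‖ = ‖h‖) :
    HasUniversalOpa E f ↔
      HasUniversalOpa E (⟨convSeq g (fun k => f k), hmem f⟩ : H2) := by
  have hC : (starRingEnd ℂ) (g 0) ≠ 0 := by simpa using hg0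
  constructor
  · exact UA.transfer f _ _ hC (fun n => UA.opa_eq g hmem hiso f hg0 n) E
  · intro H
    refine UA.transfer _ f ((starRingEnd ℂ) (g 0))⁻¹ (inv_ne_zero hC) (fun n => ?_) E H
    rw [UA.opa_eq g hmem hiso f hg0 n, smul_smul, inv_mul_cancel₀ hC, one_smul]


end
end
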